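/- Let a ≥ 1, b ≥ 2, c > 0, n ≥ 1 be integers with gcd(a·b^n − c, a·b^{n+1} − c, a·b^{n+2} − c) = 1 and a·b^n − c > 0. Set q = ⌊(a·b^n − c)/(b+1)⌋ and r = (a·b^n − c) − (b+1)q, and suppose r ≥ 1. Then for each integer p with 0 ≤ p ≤ q, the largest integer N having at most p representations as a nonnegative integer combination of a·b^n − c, a·b^{n+1} − c, a·b^{n+2} − c equals (r−1)(a·b^{n+1} − c) + (q+p)(a·b^{n+2} − c) − (a·b^n − c). -/

import Mathlib

set_option maxHeartbeats 1000000

lemma solsFinite (A1 A2 A3 N : ℤ) (h1 : 0 < A1) (h2 : 0 < A2) (h3 : 0 < A3) :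
    Finite {v : ℕ × ℕ × ℕ // A1 * v.1 + A2 * v.2.1 + A3 * v.2.2 = N} := by
  have key : ∀ v : {v : ℕ × ℕ × ℕ // A1 * v.1 + A2 * v.2.1 + A3 * v.2.2 = N},
      v.1.1 < N.toNat + 1 ∧ v.1.2.1 < N.toNat + 1 ∧ v.1.2.2 < N.toNat + 1 := by
    rintro ⟨⟨x, y, z⟩, hv⟩
    simp only at hv ⊢
    have h1' : (1:ℤ) ≤ A1 := h1
    have h2' : (1:ℤ) ≤ A2 := h2
    have h3' : (1:ℤ) ≤ A3 := h3
    have hx0 : (0:ℤ) ≤ (x:ℤ) := Int.natCast_nonneg x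
    have hy0 : (0:ℤ) ≤ (y:ℤ) := Int.natCast_nonneg y
    have hz0 : (0:ℤ) ≤ (z:ℤ) := Int.natCast_nonneg z
    have e1 : (x:ℤ) ≤ A1 * x := le_mul_of_one_le_left hx0 h1'
    have e2 : (y:ℤ) ≤ A2 * y := le_mul_of_one_le_left hy0 h2'
    have e3 : (z:ℤ) ≤ A3 * z := le_mul_of_one_le_left hz0 h3'
    have f1 : (0:ℤ) ≤ A1 * x := le_trans hx0 e1
    have f2 : (0:ℤ) ≤ A2 * y := le_trans hy0 e2
    have f3 : (0:ℤ) ≤ A3 * z := le_trans hz0 e3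
    have hx : (x : ℤ) ≤ N := by linarith
    have hy : (y : ℤ) ≤ N := by linarith
    have hz : (z : ℤ) ≤ N := by linarith
    omega
  apply Finite.of_injective (fun v => ((⟨v.1.1, (key v).1⟩ : Fin (N.toNat + 1)),
    (⟨v.1.2.1, (key v).2.1⟩ : Fin (N.toNat + 1)), (⟨v.1.2.2, (key v).2.2⟩ : Fin (N.toNat + 1))))
  rintro ⟨⟨x, y, z⟩, hv⟩ ⟨⟨x', y', z'⟩, hv'⟩ h
  simp only [Prod.mk.injEq, Fin.mk.injEq] at h
  exact Subtype.ext (by simp [h.1, h.2.1, h.2.2])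


lemma prodIneq (cs ds A1 A2 b : ℤ) (hc : 0 ≤ cs) (hcd : ds ≤ cs)
    (hA1 : 0 ≤ A1) (hbA : b * A1 ≤ A2) (hb : 0 ≤ b) :
    b * ds * A1 ≤ cs * A2 := by
  rcases le_or_gt ds 0 with h | h
  · have h1 : b * ds * A1 ≤ 0 := by
      have := mul_nonneg hb hA1
      nlinarith
    have h2 : 0 ≤ cs * A2 := mul_nonneg hc (le_trans (mul_nonneg hb hA1) hbA)
    linarith
  · calc b * ds * A1 = ds * (b * A1) := by ring
    _ ≤ ds * A2 := by apply mul_le_mul_of_nonneg_left hbA h.le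
    _ ≤ cs * A2 := by
        apply mul_le_mul_of_nonneg_right hcd (le_trans (mul_nonneg hb hA1) hbA)


section
variable (b d A1 A2 A3 q r p : ℤ)

lemma keyA (hb : 2 ≤ b) (hd : 1 ≤ d) (hA1 : 0 < A1)
    (hA2 : A2 = b * A1 + d) (hA3 : A3 = b * A2 + d)
    (hqr : A1 = (b + 1) * q + r) (hr1 : 1 ≤ r) (hrb : r ≤ b)
    (hp0 : 0 ≤ p) (hpq : p ≤ q) (hcop : IsCoprime d A1)
    (x y z : ℕ)
    (h : A1 * x + A2 * y + A3 * z = (r - 1) * A2 + (q + p) * A3 - A1) :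
    (z : ℤ) < p ∧ (y : ℤ) + (b + 1) * z = (b + 1) * p - 1 := by
  have hq0 : 0 ≤ q := le_trans hp0 hpq
  have hb0 : (0:ℤ) ≤ b := by linarith
  have hbpos : (0:ℤ) < b + 1 := by linarith
  have hA1' : (1:ℤ) ≤ A1 := hA1
  have hA2pos : 0 < A2 := by nlinarith
  have hA3pos : 0 < A3 := by nlinarith
  have hA3' : A3 = b^2 * A1 + (b + 1) * d := by rw [hA3, hA2]; ring
  have hA3eq : A3 = (b + 1) * A2 - b * A1 := by rw [hA3, hA2]; ring
  have hx0 : (0:ℤ) ≤ (x:ℤ) := Int.natCast_nonneg x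
  have hy0 : (0:ℤ) ≤ (y:ℤ) := Int.natCast_nonneg y
  have hz0 : (0:ℤ) ≤ (z:ℤ) := Int.natCast_nonneg z
  have ht0 : (0:ℤ) ≤ (y:ℤ) + (b + 1) * z := by positivity
  have id1 : A1 * ((x:ℤ) + b * y + b^2 * z) + d * ((y:ℤ) + (b + 1) * z)
      = (r - 1) * A2 + (q + p) * A3 - A1 := by
    rw [← h]; linear_combination (-(y:ℤ)) * hA2 + (-(z:ℤ)) * hA3'
  have id2 : A1 * (b * (r - 1) + b^2 * (q + p) - 1) + d * (r - 1 + (b + 1) * (q + p))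
      = (r - 1) * A2 + (q + p) * A3 - A1 := by
    linear_combination (1 - r) * hA2 - (q + p) * hA3'
  have hdvd : A1 ∣ d * (((y:ℤ) + (b + 1) * z) - (r - 1 + (b + 1) * (q + p))) := by
    refine ⟨(b * (r - 1) + b^2 * (q + p) - 1) - ((x:ℤ) + b * y + b^2 * z), ?_⟩
    linear_combination id1 - id2
  obtain ⟨j, hj⟩ := (hcop.symm.dvd_of_dvd_mul_left hdvd)
  have hw : A2 * (y:ℤ) + A3 * z = ((y:ℤ) + (b + 1) * z) * A2 - b * z * A1 := by
    linear_combination (z:ℤ) * hA3eq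
  have hwF : ((y:ℤ) + (b + 1) * z) * A2 - b * z * A1
      ≤ (r - 1) * A2 + (q + p) * A3 - A1 := by
    nlinarith [mul_nonneg hA1.le hx0]
  have hWeq : (r - 1) * A2 + (q + p) * A3
      = (r - 1 + (b + 1) * (q + p)) * A2 - b * (q + p) * A1 := by
    rw [hA3eq]; ring
  rcases le_or_gt j (-1) with hj1 | hj1
  · rcases le_or_gt j (-2) with hj2 | hj2
    · exfalso
      have hm2 : A1 * j ≤ A1 * (-2) := mul_le_mul_of_nonneg_left hj2 hA1.le
      have hple : (b+1) * p ≤ (b+1) * q := mul_le_mul_of_nonneg_left hpq hbpos.le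
      linarith
    · have hjm : j = -1 := by omega
      rw [hjm] at hj
      have htval : (y:ℤ) + (b + 1) * z = (b + 1) * p - 1 := by linarith
      refine ⟨?_, htval⟩
      have h2 : (b + 1) * (z:ℤ) < (b + 1) * p := by linarith
      exact lt_of_mul_lt_mul_left h2 hbpos.le
  · exfalso
    rcases le_or_gt 1 j with hj2 | hj2
    · -- j ≥ 1 : weight too big
      have hA1j : A1 * 1 ≤ A1 * j := mul_le_mul_of_nonneg_left hj2 hA1.le
      have htbig : r - 1 + (b + 1) * (q + p) + A1 ≤ (y:ℤ) + (b + 1) * z := by linarith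
      have eqn : (b + 1) * ((((y:ℤ) + (b + 1) * z)) * A2 - b * z * A1)
          - (((y:ℤ) + (b + 1) * z)) * A3 = b * A1 * (y:ℤ) := by
        rw [hA3eq]; ring
      have h1 : (((y:ℤ) + (b + 1) * z)) * A3
          ≤ (b + 1) * ((((y:ℤ) + (b + 1) * z)) * A2 - b * z * A1) := by
        linarith [eqn, mul_nonneg (mul_nonneg hb0 hA1.le) hy0]
      have h2 : (r - 1 + (b + 1) * (q + p) + A1) * A3 ≤ (((y:ℤ) + (b + 1) * z)) * A3 :=
        mul_le_mul_of_nonneg_right htbig hA3pos.le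
      have expand : (r - 1 + (b + 1) * (q + p) + A1) * A3
          - (b + 1) * ((r - 1) * A2 + (q + p) * A3 - A1)
          = A1 * (A3 + b + 1 - b * (r - 1)) := by rw [hA3eq]; ring
      have hbr : b * r ≤ b * b := mul_le_mul_of_nonneg_left hrb hb0
      have hbbA1 : b * b * 1 ≤ b * b * A1 :=
        mul_le_mul_of_nonneg_left hA1' (mul_nonneg hb0 hb0)
      have hbd : (b+1) * 1 ≤ (b+1) * d := mul_le_mul_of_nonneg_left hd hbpos.le
      have hpos2 : 0 < A3 + b + 1 - b * (r - 1) := by nlinarith [hA3']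
      have h3 : (b + 1) * ((r - 1) * A2 + (q + p) * A3 - A1)
          < (r - 1 + (b + 1) * (q + p) + A1) * A3 := by
        linarith [expand, mul_pos hA1 hpos2]
      have h4 := mul_le_mul_of_nonneg_left hwF (by linarith : (0:ℤ) ≤ b + 1)
      linarith
    · -- j = 0
      have hjm : j = 0 := by omega
      rw [hjm, mul_zero] at hj
      have htval : (y:ℤ) + (b + 1) * z = r - 1 + (b + 1) * (q + p) := by linarith
      have e0 : (r - 1 + (b+1)*(q+p)) * A2 - b * z * A1
          = ((y:ℤ) + (b + 1) * z) * A2 - b * z * A1 := by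
        linear_combination (-A2) * htval
      have hzlarge : (q + p : ℤ) < z := by
        have hstep : A1 * (b * (q + p) + 1) ≤ A1 * (b * z) := by linarith
        have := le_of_mul_le_mul_left hstep hA1
        have h5 : b * (q + p) < b * z := by linarith
        exact lt_of_mul_lt_mul_left h5 hb0
      have hzsmall : (z:ℤ) < q + p + 1 := by
        have h2 : (b + 1) * (z:ℤ) < (b + 1) * (q + p + 1) := by linarith
        exact lt_of_mul_lt_mul_left h2 hbpos.le
      linarith

end


lemma partA (b d A1 A2 A3 q r p : ℤ)
    (hA1 : 0 < A1) (hp0 : 0 ≤ p)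
    (keyA : ∀ x y z : ℕ,
      A1 * x + A2 * y + A3 * z = (r - 1) * A2 + (q + p) * A3 - A1 →
      (z : ℤ) < p ∧ (y : ℤ) + (b + 1) * z = (b + 1) * p - 1) :
    (Nat.card {v : ℕ × ℕ × ℕ // A1 * v.1 + A2 * v.2.1 + A3 * v.2.2
      = (r - 1) * A2 + (q + p) * A3 - A1} : ℤ) ≤ p := by
  set F := (r - 1) * A2 + (q + p) * A3 - A1 with hF
  have hcard : Nat.card {v : ℕ × ℕ × ℕ // A1 * v.1 + A2 * v.2.1 + A3 * v.2.2 = F}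
      ≤ p.toNat := by
    have hinj : Function.Injective
        (fun v : {v : ℕ × ℕ × ℕ // A1 * v.1 + A2 * v.2.1 + A3 * v.2.2 = F} =>
          (⟨v.1.2.2, by
            have := (keyA v.1.1 v.1.2.1 v.1.2.2 v.2).1
            omega⟩ : Fin p.toNat)) := by
      rintro ⟨⟨x, y, z⟩, hv⟩ ⟨⟨x', y', z'⟩, hv'⟩ hzz
      simp only [Fin.mk.injEq] at hzz
      subst hzz
      obtain ⟨-, ht⟩ := keyA x y z hv
      obtain ⟨-, ht'⟩ := keyA x' y' z hv'
      have hy : (y:ℤ) = y' := by linarith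
      have hyn : y = y' := by exact_mod_cast hy
      subst hyn
      have hx : A1 * (x:ℤ) = A1 * x' := by linarith [hv, hv']
      have hxn : x = x' := by
        have := mul_left_cancel₀ (ne_of_gt hA1) hx
        exact_mod_cast this
      exact Subtype.ext (by simp [hxn])
    calc Nat.card {v : ℕ × ℕ × ℕ // A1 * v.1 + A2 * v.2.1 + A3 * v.2.2 = F}
        ≤ Nat.card (Fin p.toNat) := Nat.card_le_card_of_injective _ hinj
      _ = p.toNat := by simp
  omega

lemma partB (b d A1 A2 A3 q r p : ℤ)
    (hb : 2 ≤ b) (hd : 1 ≤ d) (hA1 : 0 < A1)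
    (hA2 : A2 = b * A1 + d) (hA3 : A3 = b * A2 + d)
    (hqr : A1 = (b + 1) * q + r) (hr1 : 1 ≤ r) (hrb : r ≤ b)
    (hp0 : 0 ≤ p) (hpq : p ≤ q) (hcop : IsCoprime d A1)
    (N : ℤ) (hFN : (r - 1) * A2 + (q + p) * A3 - A1 < N) :
    p + 1 ≤ (Nat.card {v : ℕ × ℕ × ℕ //
      A1 * v.1 + A2 * v.2.1 + A3 * v.2.2 = N} : ℤ) := by
  have hq0 : 0 ≤ q := le_trans hp0 hpq
  have hb0 : (0:ℤ) ≤ b := by linarith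
  have hbpos : (0:ℤ) < b + 1 := by linarith
  have hA1' : (1:ℤ) ≤ A1 := hA1
  have hA2pos : 0 < A2 := by nlinarith
  have hA3pos : 0 < A3 := by nlinarith
  have hbA : b * A1 ≤ A2 := by linarith [hA2]
  have hA3eq : A3 = (b + 1) * A2 - b * A1 := by rw [hA3, hA2]; ring
  have hWeq : (r - 1) * A2 + (q + p) * A3
      = (r - 1 + (b + 1) * (q + p)) * A2 - b * (q + p) * A1 := by
    rw [hA3eq]; ring
  -- residue τ
  obtain ⟨u, v0, huv⟩ := hcop
  set τ := (N * u) % A1 with hτdef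
  have hτ0 : 0 ≤ τ := Int.emod_nonneg _ (ne_of_gt hA1)
  have hτA : τ < A1 := Int.emod_lt_of_pos _ hA1
  have hmod : τ = N * u - A1 * (N * u / A1) := by rw [hτdef, Int.emod_def]
  have hNτ : A1 ∣ d * τ - N := by
    refine ⟨-N * v0 - d * (N * u / A1), ?_⟩
    linear_combination d * hmod + N * huv
  -- m0, r0
  set m0 := τ / (b + 1) with hm0def
  set r0 := τ % (b + 1) with hr0def
  have hm0r0 : (b + 1) * m0 + r0 = τ := Int.mul_ediv_add_emod τ (b + 1)
  have hr00 : 0 ≤ r0 := Int.emod_nonneg _ (ne_of_gt hbpos)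
  have hr0b : r0 ≤ b := by
    have := Int.emod_lt_of_pos τ hbpos; omega
  have hm00 : 0 ≤ m0 := Int.ediv_nonneg hτ0 hbpos.le
  have hm0q : m0 ≤ q := by
    by_contra hcon
    push_neg at hcon
    have h1 : (b + 1) * (q + 1) ≤ (b + 1) * m0 := by
      exact mul_le_mul_of_nonneg_left (by omega) hbpos.le
    linarith
  have hm0qr : m0 = q → r0 ≤ r - 1 := by
    intro hEq; rw [hEq] at hm0r0; linarith
  -- e, r1
  set e := (r0 + r) / (b + 1) with hedef
  set r1 := (r0 + r) % (b + 1) with hr1def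
  have her1 : (b + 1) * e + r1 = r0 + r := Int.mul_ediv_add_emod _ (b + 1)
  have hr10 : 0 ≤ r1 := Int.emod_nonneg _ (ne_of_gt hbpos)
  have hr1b : r1 ≤ b := by
    have := Int.emod_lt_of_pos (r0 + r) hbpos; omega
  have he0 : 0 ≤ e := Int.ediv_nonneg (by linarith) hbpos.le
  have he1 : e ≤ 1 := by
    by_contra hcon
    push_neg at hcon
    have h1 : (b + 1) * 2 ≤ (b + 1) * e := mul_le_mul_of_nonneg_left (by omega) hbpos.le
    linarith
  have heg : b + 1 ≤ r0 + r → 1 ≤ e := by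
    intro hge
    by_contra hcon
    push_neg at hcon
    have h1 : (b + 1) * e ≤ (b + 1) * 0 := mul_le_mul_of_nonneg_left (by omega) hbpos.le
    linarith
  -- generic builder
  have build : ∀ t z : ℤ, 0 ≤ z → 0 ≤ t - (b + 1) * z → A1 ∣ (t - τ) →
      t * A2 - b * z * A1 ≤ (r - 1) * A2 + (q + p) * A3 →
      ∃ w : {v : ℕ × ℕ × ℕ // A1 * v.1 + A2 * v.2.1 + A3 * v.2.2 = N},
        ((w.1.2.2 : ℤ)) = z := by
    intro t z hz0 hy0 hτt hwW
    obtain ⟨ε, hε⟩ := hτt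
    obtain ⟨k, hk⟩ := hNτ
    have hNw : N - (t * A2 - b * z * A1) = A1 * (-k - (d * ε + t * b - b * z)) := by
      linear_combination -hk - d * hε - t * hA2
    set X := -k - (d * ε + t * b - b * z) with hXdef
    have hX0 : 0 ≤ X := by
      by_contra hcon
      push_neg at hcon
      have h1 : A1 * X ≤ A1 * (-1) := mul_le_mul_of_nonneg_left (by omega) hA1.le
      linarith
    refine ⟨⟨(X.toNat, (t - (b + 1) * z).toNat, z.toNat), ?_⟩, ?_⟩
    · simp only
      rw [Int.toNat_of_nonneg hX0, Int.toNat_of_nonneg hy0, Int.toNat_of_nonneg hz0]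
      linear_combination -hNw + z * hA3eq
    · simp only
      rw [Int.toNat_of_nonneg hz0]
  -- per-index solutions
  have hsol : ∀ j : ℤ, 0 ≤ j → j ≤ p →
      ∃ w : {v : ℕ × ℕ × ℕ // A1 * v.1 + A2 * v.2.1 + A3 * v.2.2 = N},
        ((w.1.2.2 : ℤ)) = if j ≤ m0 then m0 - j else 2 * m0 + q + e + 1 - j := by
    intro j hj0 hjp
    by_cases hjm : j ≤ m0
    · rw [if_pos hjm]
      refine build τ (m0 - j) (by omega) ?_ ⟨0, by ring⟩ ?_
      · have h1 : 0 ≤ (b + 1) * j := mul_nonneg hbpos.le hj0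
        linarith
      · rw [hWeq]
        have hc : 0 ≤ r - 1 + (b + 1) * (q + p) - τ := by
          rcases eq_or_lt_of_le hm0q with hEq | hLt
          · have hr0r := hm0qr hEq
            have hbp : 0 ≤ (b + 1) * p := mul_nonneg hbpos.le hp0
            have hmq : (b + 1) * m0 = (b + 1) * q := by rw [hEq]
            linarith
          · have h1 : (b + 1) * (m0 + 1) ≤ (b + 1) * q :=
              mul_le_mul_of_nonneg_left (by omega) hbpos.le
            have hbp : 0 ≤ (b + 1) * p := mul_nonneg hbpos.le hp0
            linarith
        have hcd : q + p - (m0 - j) ≤ r - 1 + (b + 1) * (q + p) - τ := by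
          have hbp : p ≤ b * p := le_mul_of_one_le_left hp0 (by linarith)
          rcases eq_or_lt_of_le hm0q with hEq | hLt
          · have hr0r := hm0qr hEq
            have hmq : (b + 1) * m0 = (b + 1) * q := by rw [hEq]
            linarith
          · have h1 : b * (m0 + 1) ≤ b * q := mul_le_mul_of_nonneg_left (by omega) hb0
            linarith
        have key := prodIneq (r - 1 + (b + 1) * (q + p) - τ) (q + p - (m0 - j)) A1 A2 b
          hc hcd hA1.le hbA hb0
        linarith
    · push_neg at hjm
      rw [if_neg (by omega)]
      refine build (τ + A1) (2 * m0 + q + e + 1 - j) (by omega) ?_ ⟨1, by ring⟩ ?_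
      · have h1 : b * (m0 + 1) ≤ b * j := mul_le_mul_of_nonneg_left (by omega) hb0
        linarith [hm0r0, hqr, her1]
      · rw [hWeq]
        have hpm : m0 + 1 ≤ p := by omega
        have hc : 0 ≤ r - 1 + (b + 1) * (q + p) - (τ + A1) := by
          have h1 : b * (m0 + 1) ≤ b * p := mul_le_mul_of_nonneg_left (by omega) hb0
          linarith [hm0r0, hqr]
        have hcd : q + p - (2 * m0 + q + e + 1 - j)
            ≤ r - 1 + (b + 1) * (q + p) - (τ + A1) := by
          have h1 : (b - 1) * (m0 + 1) ≤ (b - 1) * p :=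
            mul_le_mul_of_nonneg_left (by omega) (by linarith)
          rcases eq_or_lt_of_le hr0b with hEq | hLt
          · have he' : 1 ≤ e := heg (by omega)
            linarith [hm0r0, hqr]
          · linarith [hm0r0, hqr]
        have key := prodIneq (r - 1 + (b + 1) * (q + p) - (τ + A1))
          (q + p - (2 * m0 + q + e + 1 - j)) A1 A2 b hc hcd hA1.le hbA hb0
        linarith
  -- conclude via cardinality
  have hfin : Finite {v : ℕ × ℕ × ℕ // A1 * v.1 + A2 * v.2.1 + A3 * v.2.2 = N} :=
    solsFinite A1 A2 A3 N hA1 hA2pos hA3pos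
  set P := p.toNat with hPdef
  have hchoice : ∀ j : Fin (P + 1),
      ∃ w : {v : ℕ × ℕ × ℕ // A1 * v.1 + A2 * v.2.1 + A3 * v.2.2 = N},
        ((w.1.2.2 : ℤ)) = if ((j : ℕ) : ℤ) ≤ m0 then m0 - ((j : ℕ) : ℤ)
          else 2 * m0 + q + e + 1 - ((j : ℕ) : ℤ) := by
    intro j
    have hj := j.isLt
    exact hsol ((j : ℕ) : ℤ) (by positivity) (by omega)
  choose f hf using hchoice
  have hinjf : Function.Injective f := by
    intro j1 j2 hff
    have h1 := hf j1
    have h2 := hf j2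
    rw [hff] at h1
    have hzz : (if ((j1 : ℕ) : ℤ) ≤ m0 then m0 - ((j1 : ℕ) : ℤ)
          else 2 * m0 + q + e + 1 - ((j1 : ℕ) : ℤ))
        = (if ((j2 : ℕ) : ℤ) ≤ m0 then m0 - ((j2 : ℕ) : ℤ)
          else 2 * m0 + q + e + 1 - ((j2 : ℕ) : ℤ)) := by rw [← h1, ← h2]
    have hj1 := j1.isLt
    have hj2 := j2.isLt
    apply Fin.ext
    split_ifs at hzz <;> omega
  have hcardge : P + 1 ≤ Nat.card
      {v : ℕ × ℕ × ℕ // A1 * v.1 + A2 * v.2.1 + A3 * v.2.2 = N} := by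
    calc P + 1 = Nat.card (Fin (P + 1)) := by simp
    _ ≤ _ := Nat.card_le_card_of_injective f hinjf
  omega


/-- Theorem 1, case `(b+1) ∤ (a b^n - c)`, `c > 0`: the `p`-Frobenius number of
`(a b^n - c, a b^{n+1} - c, a b^{n+2} - c)` is
`(r-1)(a b^{n+1} - c) + (q+p)(a b^{n+2} - c) - (a b^n - c)` for `0 ≤ p ≤ q`. -/
theorem p_frobenius_shifted_geometric (a b c : ℤ) (n : ℕ)
    (ha : 1 ≤ a) (hb : 2 ≤ b) (hc : 0 < c) (hn : 1 ≤ n)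
    (hpos : 0 < a * b ^ n - c)
    (hgcd : Int.gcd (Int.gcd (a * b ^ n - c) (a * b ^ (n + 1) - c))
      (a * b ^ (n + 2) - c) = 1)
    (q r : ℤ)
    (hq : q = (a * b ^ n - c) / (b + 1))
    (hr : r = (a * b ^ n - c) - (b + 1) * q)
    (hr1 : 1 ≤ r)
    (p : ℤ) (hp0 : 0 ≤ p) (hpq : p ≤ q) :
    IsGreatest {N : ℤ |
        (Nat.card {v : ℕ × ℕ × ℕ //
          (a * b ^ n - c) * v.1 + (a * b ^ (n + 1) - c) * v.2.1
            + (a * b ^ (n + 2) - c) * v.2.2 = N} : ℤ) ≤ p}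
      ((r - 1) * (a * b ^ (n + 1) - c) + (q + p) * (a * b ^ (n + 2) - c)
        - (a * b ^ n - c)) := by
  have hbpos : (0:ℤ) < b + 1 := by linarith
  have hA2id : a * b ^ (n + 1) - c = b * (a * b ^ n - c) + (b - 1) * c := by
    rw [pow_succ]; ring
  have hA3id : a * b ^ (n + 2) - c = b * (a * b ^ (n + 1) - c) + (b - 1) * c := by
    rw [show n + 2 = (n + 1) + 1 from rfl, pow_succ]; ring
  have hd : 1 ≤ (b - 1) * c := by nlinarith
  have hqr : a * b ^ n - c = (b + 1) * q + r := by linarith [hr]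
  have hrb : r ≤ b := by
    have h1 : r = (a * b ^ n - c) % (b + 1) := by
      rw [hr, hq, Int.emod_def]
    have h2 := Int.emod_lt_of_pos (a * b ^ n - c) hbpos
    omega
  have hcop : IsCoprime ((b - 1) * c) (a * b ^ n - c) := by
    rw [Int.isCoprime_iff_gcd_eq_one]
    set g := Int.gcd ((b - 1) * c) (a * b ^ n - c) with hg
    have hg1 : (g:ℤ) ∣ (b - 1) * c := Int.gcd_dvd_left _ _
    have hg2 : (g:ℤ) ∣ (a * b ^ n - c) := Int.gcd_dvd_right _ _
    have hgA2 : (g:ℤ) ∣ (a * b ^ (n + 1) - c) := by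
      rw [hA2id]; exact dvd_add (hg2.mul_left b) hg1
    have hgA3 : (g:ℤ) ∣ (a * b ^ (n + 2) - c) := by
      rw [hA3id]; exact dvd_add (hgA2.mul_left b) hg1
    have hdvd1 : (g:ℤ) ∣ (Int.gcd (a * b ^ n - c) (a * b ^ (n + 1) - c) : ℤ) :=
      Int.dvd_coe_gcd hg2 hgA2
    have hdvd2 : (g:ℤ) ∣ (Int.gcd (Int.gcd (a * b ^ n - c) (a * b ^ (n + 1) - c))
        (a * b ^ (n + 2) - c) : ℤ) := Int.dvd_coe_gcd hdvd1 hgA3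
    rw [hgcd] at hdvd2
    have : g ∣ 1 := by exact_mod_cast hdvd2
    exact Nat.dvd_one.mp this
  constructor
  · show (Nat.card {v : ℕ × ℕ × ℕ //
        (a * b ^ n - c) * v.1 + (a * b ^ (n + 1) - c) * v.2.1
          + (a * b ^ (n + 2) - c) * v.2.2
        = (r - 1) * (a * b ^ (n + 1) - c) + (q + p) * (a * b ^ (n + 2) - c)
          - (a * b ^ n - c)} : ℤ) ≤ p
    exact partA b ((b - 1) * c) (a * b ^ n - c) (a * b ^ (n + 1) - c)
      (a * b ^ (n + 2) - c) q r p hpos hp0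
      (fun x y z h => keyA b ((b - 1) * c) (a * b ^ n - c) (a * b ^ (n + 1) - c)
        (a * b ^ (n + 2) - c) q r p hb hd hpos hA2id hA3id hqr hr1 hrb hp0 hpq hcop
        x y z h)
  · intro N hN
    by_contra hcon
    push_neg at hcon
    have hge := partB b ((b - 1) * c) (a * b ^ n - c) (a * b ^ (n + 1) - c)
      (a * b ^ (n + 2) - c) q r p hb hd hpos hA2id hA3id hqr hr1 hrb hp0 hpq hcop
      N hcon
    have hle : (Nat.card {v : ℕ × ℕ × ℕ //
        (a * b ^ n - c) * v.1 + (a * b ^ (n + 1) - c) * v.2.1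
          + (a * b ^ (n + 2) - c) * v.2.2 = N} : ℤ) ≤ p := hN
    linarith
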